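/- Fix 0 < β < 1. For every integer p ≥ 0 and every real k, the p-th derivative of the function k ↦ exp(-(1+ik)^β) (principal branch) satisfies |(d/dk)^p exp(-(1+ik)^β)| ≤ (2p)!/p!. -/

import Mathlib

open Complex Finset

noncomputable section Aux

variable (β : ℝ)

/-- inner base -/
lemma base_ne (k : ℝ) : (1 + Complex.I * k) ≠ 0 := by
  intro h
  have := congrArg Complex.re h
  simp at this

lemma base_slit (k : ℝ) : (1 + Complex.I * k) ∈ Complex.slitPlane := by
  left; simp

lemma base_abs (k : ℝ) : 1 ≤ ‖(1 + Complex.I * k)‖ := by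
  have h := Complex.abs_re_le_norm (1 + Complex.I * k)
  simpa using h

/-- derivative of k ↦ (1+Ik)^c -/
lemma hasDerivAt_cpow_aux (c : ℂ) (k : ℝ) :
    HasDerivAt (fun k : ℝ => (1 + Complex.I * k) ^ c)
      (c * (1 + Complex.I * k) ^ (c - 1) * Complex.I) k := by
  have h1 : HasDerivAt (fun z : ℂ => 1 + Complex.I * z) Complex.I (k : ℂ) := by
    simpa using ((hasDerivAt_id (k : ℂ)).const_mul Complex.I).const_add 1
  have h2 : HasDerivAt (fun z : ℂ => (1 + Complex.I * z) ^ c)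
      (c * (1 + Complex.I * (k:ℂ)) ^ (c - 1) * Complex.I) (k : ℂ) :=
    h1.cpow_const (base_slit k)
  exact h2.comp_ofReal

lemma contDiff_cpow_aux (c : ℂ) :
    ContDiff ℝ ⊤ (fun k : ℝ => (1 + Complex.I * k) ^ c) := by
  rw [contDiff_iff_contDiffAt]
  intro x
  set S : Set ℂ := {z : ℂ | 0 < (1 + Complex.I * z).re} with hS
  have hSopen : IsOpen S := by
    have : Continuous fun z : ℂ => (1 + Complex.I * z).re :=
      Complex.continuous_re.comp (by continuity)
    exact isOpen_lt continuous_const this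
  have hdiff : DifferentiableOn ℂ (fun z : ℂ => (1 + Complex.I * z) ^ c) S := by
    intro z hz
    apply DifferentiableAt.differentiableWithinAt
    apply DifferentiableAt.cpow
    · exact (differentiable_const _).differentiableAt.add
        ((differentiable_id.const_mul _).differentiableAt)
    · exact differentiableAt_const _
    · exact Or.inl hz
  have hmem : (x : ℂ) ∈ S := by simp [hS]
  have hana : AnalyticAt ℂ (fun z : ℂ => (1 + Complex.I * z) ^ c) (x : ℂ) :=
    hdiff.analyticAt (hSopen.mem_nhds hmem)
  have hcd : ContDiffAt ℂ ⊤ (fun z : ℂ => (1 + Complex.I * z) ^ c) (x : ℂ) :=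
    hana.contDiffAt
  have hcdR : ContDiffAt ℝ ⊤ (fun z : ℂ => (1 + Complex.I * z) ^ c) (x : ℂ) :=
    hcd.restrict_scalars ℝ
  exact hcdR.comp x (Complex.ofRealCLM.contDiff.contDiffAt)

end Aux

section Main

variable {β : ℝ} (hβ0 : 0 < β) (hβ1 : β < 1)

/-- coefficient -/
noncomputable def aa (β : ℝ) (j : ℕ) : ℝ := ∏ l ∈ Finset.range j, (β - l)

/-- the j-th derivative of g -/
noncomputable def G (β : ℝ) (j : ℕ) (k : ℝ) : ℂ :=
  (aa β j : ℂ) * Complex.I ^ j * (1 + Complex.I * k) ^ ((β : ℂ) - j)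

lemma aa_succ (j : ℕ) : aa β (j + 1) = aa β j * (β - j) := Finset.prod_range_succ _ _

lemma abs_aa_le (hβ0 : 0 < β) (hβ1 : β < 1) (j : ℕ) :
    |aa β (j + 1)| ≤ (Nat.factorial j : ℝ) := by
  induction j with
  | zero => simp [aa, abs_of_pos hβ0]; linarith
  | succ n ih =>
      rw [aa_succ, abs_mul]
      have h1 : |β - (n + 1 : ℕ)| ≤ (n + 1 : ℝ) := by
        rw [abs_of_nonpos (by push_cast; linarith)]
        push_cast; linarith
      calc |aa β (n + 1)| * |β - (n + 1 : ℕ)|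
          ≤ (Nat.factorial n : ℝ) * (n + 1 : ℝ) := by
            apply mul_le_mul ih h1 (abs_nonneg _) (Nat.cast_nonneg _)
        _ = (Nat.factorial (n + 1) : ℝ) := by
            rw [Nat.factorial_succ]; push_cast; ring

lemma norm_cpow_le_one (k : ℝ) {c : ℂ} (hre : c.re ≤ 0) (him : c.im = 0) :
    ‖(1 + Complex.I * k) ^ c‖ ≤ 1 := by
  rw [Complex.norm_cpow_of_ne_zero (base_ne k), him]
  simp only [mul_zero, Real.exp_zero, div_one]
  exact Real.rpow_le_one_of_one_le_of_nonpos (base_abs k) hre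

lemma norm_G_le (hβ0 : 0 < β) (hβ1 : β < 1) (j : ℕ) (k : ℝ) :
    ‖G β (j + 1) k‖ ≤ (Nat.factorial j : ℝ) := by
  unfold G
  rw [norm_mul, norm_mul]
  have h1 : ‖(aa β (j+1) : ℂ)‖ = |aa β (j+1)| := by
    rw [Complex.norm_real, Real.norm_eq_abs]
  have h2 : ‖(Complex.I : ℂ) ^ (j+1)‖ = 1 := by
    rw [norm_pow, Complex.norm_I, one_pow]
  have h3 : ‖(1 + Complex.I * k) ^ ((β : ℂ) - (j+1 : ℕ))‖ ≤ 1 := by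
    apply norm_cpow_le_one
    · simp; linarith
    · simp
  calc ‖(aa β (j+1) : ℂ)‖ * ‖(Complex.I : ℂ) ^ (j+1)‖ * ‖(1 + Complex.I * k) ^ ((β:ℂ) - (j+1:ℕ))‖
      ≤ (Nat.factorial j : ℝ) * 1 * 1 := by
        apply mul_le_mul _ h3 (norm_nonneg _) (by positivity)
        rw [h1, h2, mul_one, mul_one]
        exact abs_aa_le hβ0 hβ1 j
    _ = (Nat.factorial j : ℝ) := by ring

lemma hasDerivAt_G (j : ℕ) (k : ℝ) : HasDerivAt (G β j) (G β (j + 1) k) k := by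
  have h := (hasDerivAt_cpow_aux ((β : ℂ) - j) k).const_mul ((aa β j : ℂ) * Complex.I ^ j)
  have hfun : G β j = fun x : ℝ => (aa β j : ℂ) * Complex.I ^ j * (1 + Complex.I * x) ^ ((β : ℂ) - j) := by
    funext x; unfold G; ring
  rw [hfun]
  refine h.congr_deriv ?_
  unfold G
  rw [aa_succ]
  have : ((β : ℂ) - j) - 1 = (β : ℂ) - (j + 1 : ℕ) := by push_cast; ring
  rw [this]
  push_cast
  ring

lemma deriv_G (j : ℕ) : deriv (G β j) = G β (j + 1) :=
  funext fun k => (hasDerivAt_G j k).deriv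

lemma iteratedDeriv_G (i j : ℕ) : iteratedDeriv i (G β j) = G β (j + i) := by
  induction i generalizing j with
  | zero => simp
  | succ n ih =>
      rw [iteratedDeriv_succ', deriv_G, ih]
      have : j + 1 + n = j + (n + 1) := by omega
      rw [this]

end Main

section Main2

lemma re_cpow_nonneg {β : ℝ} (hβ0 : 0 < β) (hβ1 : β < 1) (k : ℝ) :
    0 ≤ ((1 + Complex.I * k) ^ (β : ℂ)).re := by
  set z : ℂ := 1 + Complex.I * k with hz
  have hzne : z ≠ 0 := base_ne k
  rw [Complex.cpow_def_of_ne_zero hzne, Complex.exp_re]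
  apply mul_nonneg (Real.exp_pos _).le
  have him : (Complex.log z * (β : ℂ)).im = β * z.arg := by
    simp [Complex.mul_im, Complex.log_im]; ring
  rw [him]
  apply Real.cos_nonneg_of_mem_Icc
  constructor
  · have harg : |z.arg| ≤ Real.pi / 2 := by
      rw [Complex.abs_arg_le_pi_div_two_iff]
      simp [hz]
    have h1 : |β * z.arg| ≤ Real.pi / 2 := by
      rw [abs_mul, abs_of_pos hβ0]
      calc β * |z.arg| ≤ 1 * (Real.pi / 2) := by
            apply mul_le_mul hβ1.le harg (abs_nonneg _) zero_le_one
        _ = Real.pi / 2 := one_mul _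
    linarith [abs_le.mp h1]
  · have harg : |z.arg| ≤ Real.pi / 2 := by
      rw [Complex.abs_arg_le_pi_div_two_iff]
      simp [hz]
    have h1 : |β * z.arg| ≤ Real.pi / 2 := by
      rw [abs_mul, abs_of_pos hβ0]
      calc β * |z.arg| ≤ 1 * (Real.pi / 2) := by
            apply mul_le_mul hβ1.le harg (abs_nonneg _) zero_le_one
        _ = Real.pi / 2 := one_mul _
    linarith [abs_le.mp h1]

lemma norm_h_le_one {β : ℝ} (hβ0 : 0 < β) (hβ1 : β < 1) (k : ℝ) :
    ‖Complex.exp (-((1 + Complex.I * k) ^ (β : ℂ)))‖ ≤ 1 := by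
  rw [Complex.norm_exp]
  rw [Real.exp_le_one_iff]
  simp only [Complex.neg_re, neg_nonpos]
  exact re_cpow_nonneg hβ0 hβ1 k

lemma contDiff_h (β : ℝ) :
    ContDiff ℝ ⊤ (fun k : ℝ => Complex.exp (-((1 + Complex.I * k) ^ (β : ℂ)))) := by
  have h1 : ContDiff ℝ ⊤ (fun k : ℝ => -((1 + Complex.I * k) ^ (β : ℂ))) :=
    (contDiff_cpow_aux (β : ℂ)).neg
  exact (Complex.contDiff_exp : ContDiff ℝ ⊤ Complex.exp).comp h1

lemma deriv_h {β : ℝ} :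
    deriv (fun k : ℝ => Complex.exp (-((1 + Complex.I * k) ^ (β : ℂ))))
      = fun k : ℝ => (-(G β 1 k)) * Complex.exp (-((1 + Complex.I * k) ^ (β : ℂ))) := by
  funext k
  have h1 : HasDerivAt (fun k : ℝ => -((1 + Complex.I * k) ^ (β : ℂ)))
      (-((β : ℂ) * (1 + Complex.I * k) ^ ((β : ℂ) - 1) * Complex.I)) k :=
    (hasDerivAt_cpow_aux (β : ℂ) k).neg
  have h2 := h1.cexp
  rw [h2.deriv]
  have : G β 1 k = (β : ℂ) * (1 + Complex.I * k) ^ ((β : ℂ) - 1) * Complex.I := by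
    unfold G; rw [aa_succ]; unfold aa; simp; ring
  rw [this]
  ring

end Main2

lemma key_bound {β : ℝ} (hβ0 : 0 < β) (hβ1 : β < 1) (p : ℕ) (k : ℝ) :
    ‖iteratedDeriv p (fun k : ℝ => Complex.exp (-((1 + Complex.I * k) ^ (β : ℂ)))) k‖
      ≤ (Nat.factorial p : ℝ) := by
  induction p using Nat.strong_induction_on generalizing k with
  | _ p ih =>
  cases p with
  | zero =>
      rw [iteratedDeriv_zero]
      simpa using norm_h_le_one hβ0 hβ1 k
  | succ n =>
      rw [iteratedDeriv_succ', deriv_h]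
      rw [← norm_iteratedFDeriv_eq_norm_iteratedDeriv]
      have hf : ContDiff ℝ ⊤ (fun k : ℝ => -(G β 1 k)) := by
        have : ContDiff ℝ ⊤ (G β 1) := by
          have h := (contDiff_const (c := (aa β 1 : ℂ) * Complex.I ^ 1)).mul
            (contDiff_cpow_aux ((β : ℂ) - 1))
          have hfun : G β 1 = fun x : ℝ =>
              (aa β 1 : ℂ) * Complex.I ^ 1 * (1 + Complex.I * x) ^ ((β : ℂ) - 1) := by
            funext x; unfold G; push_cast; ring_nf
          rw [hfun]; exact h
        exact this.neg
      have hg : ContDiff ℝ ⊤ (fun k : ℝ => Complex.exp (-((1 + Complex.I * k) ^ (β : ℂ)))) :=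
        contDiff_h β
      calc ‖iteratedFDeriv ℝ n (fun k : ℝ =>
              (-(G β 1 k)) * Complex.exp (-((1 + Complex.I * k) ^ (β : ℂ)))) k‖
          ≤ ∑ i ∈ Finset.range (n + 1), (n.choose i : ℝ) *
              ‖iteratedFDeriv ℝ i (fun k : ℝ => -(G β 1 k)) k‖ *
              ‖iteratedFDeriv ℝ (n - i) (fun k : ℝ =>
                Complex.exp (-((1 + Complex.I * k) ^ (β : ℂ)))) k‖ :=
            norm_iteratedFDeriv_mul_le hf hg k (le_top)
        _ ≤ ∑ i ∈ Finset.range (n + 1), (Nat.factorial n : ℝ) := by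
            apply Finset.sum_le_sum
            intro i hi
            rw [Finset.mem_range] at hi
            have hi' : i ≤ n := Nat.lt_succ_iff.mp hi
            have hb1 : ‖iteratedFDeriv ℝ i (fun k : ℝ => -(G β 1 k)) k‖
                ≤ (Nat.factorial i : ℝ) := by
              rw [norm_iteratedFDeriv_eq_norm_iteratedDeriv]
              have : iteratedDeriv i (fun k : ℝ => -(G β 1 k)) = fun k => -(G β (i + 1) k) := by
                funext x
                rw [iteratedDeriv_fun_neg, iteratedDeriv_G]
                simp [Nat.add_comm]
              rw [this]
              simpa using norm_G_le hβ0 hβ1 i k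
            have hb2 : ‖iteratedFDeriv ℝ (n - i) (fun k : ℝ =>
                Complex.exp (-((1 + Complex.I * k) ^ (β : ℂ)))) k‖
                ≤ (Nat.factorial (n - i) : ℝ) := by
              rw [norm_iteratedFDeriv_eq_norm_iteratedDeriv]
              exact ih (n - i) (by omega) k
            calc (n.choose i : ℝ) * ‖iteratedFDeriv ℝ i (fun k : ℝ => -(G β 1 k)) k‖ *
                  ‖iteratedFDeriv ℝ (n - i) (fun k : ℝ =>
                    Complex.exp (-((1 + Complex.I * k) ^ (β : ℂ)))) k‖
                ≤ (n.choose i : ℝ) * (Nat.factorial i : ℝ) * (Nat.factorial (n - i) : ℝ) := by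
                  apply mul_le_mul _ hb2 (norm_nonneg _) (by positivity)
                  exact mul_le_mul_of_nonneg_left hb1 (Nat.cast_nonneg _)
              _ = (Nat.factorial n : ℝ) := by
                  rw [← Nat.cast_mul, ← Nat.cast_mul,
                    Nat.choose_mul_factorial_mul_factorial hi']
        _ = (Nat.factorial (n + 1) : ℝ) := by
            rw [Finset.sum_const, Finset.card_range, Nat.factorial_succ]
            push_cast; ring

theorem stmt9 (β : ℝ) (hβ0 : 0 < β) (hβ1 : β < 1) (p : ℕ) (k : ℝ) :
    ‖iteratedDeriv p (fun k : ℝ => Complex.exp (-((1 + Complex.I * k) ^ (β : ℂ)))) k‖ ≤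
      (Nat.factorial (2 * p) : ℝ) / (Nat.factorial p : ℝ) := by
  have h1 := key_bound hβ0 hβ1 p k
  have h2 : (Nat.factorial p : ℝ) ≤ (Nat.factorial (2 * p) : ℝ) / (Nat.factorial p : ℝ) := by
    rw [le_div_iff₀ (by positivity : (0:ℝ) < (Nat.factorial p : ℝ))]
    rw [← Nat.cast_mul]
    apply Nat.cast_le.mpr
    have := Nat.factorial_mul_factorial_dvd_factorial_add p p
    rw [← two_mul] at this
    exact Nat.le_of_dvd (Nat.factorial_pos _) this
  linarith
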